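/- Let A₀ ∈ ℝ^{n×n} be symmetric with eigenvalues λ₁ ≥ … ≥ λ_n, and A₁ ∈ ℝ^{m×m} symmetric with constant row sum ρ and eigenvalues ρ = μ₁ ≥ μ₂ ≥ … ≥ μ_m, b ∈ ℝ. Then the characteristic polynomial of the corona block matrix A = [[A₀, b J_{1,m} ⊗ I_n],[b J_{m,1} ⊗ I_n, A₁ ⊗ I_n]] equals ∏_{i=1}^{n} (λ² − (λᵢ + ρ)λ + λᵢρ − mb²) evaluated at λ, times ∏_{j=2}^{m} (μⱼ − λ)^n (up to sign). -/

import Mathlib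

open Matrix Kronecker BigOperators Finset

/-- The adjacency matrix of the corona product: blocks
`[[A₀, b·J_{1,m} ⊗ I_n],[b·J_{m,1} ⊗ I_n, A₁ ⊗ I_n]]`. -/
noncomputable def coronaA (n m : ℕ) (A0 : Matrix (Fin n) (Fin n) ℝ)
    (A1 : Matrix (Fin m) (Fin m) ℝ) (b : ℝ) :
    Matrix (Fin n ⊕ Fin m × Fin n) (Fin n ⊕ Fin m × Fin n) ℝ :=
  Matrix.fromBlocks A0
    (Matrix.of fun i p => if p.2 = i then b else 0)
    (Matrix.of fun p i => if p.2 = i then b else 0)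
    (A1 ⊗ₖ (1 : Matrix (Fin n) (Fin n) ℝ))

theorem corona_char_poly (n m : ℕ) (hm : 1 ≤ m)
    (A0 : Matrix (Fin n) (Fin n) ℝ) (hA0 : A0.IsSymm)
    (A1 : Matrix (Fin m) (Fin m) ℝ) (hA1 : A1.IsSymm) (ρ b : ℝ)
    (hrow : A1.mulVec (fun _ => 1) = fun _ => ρ)
    (lamEig : Fin n → ℝ) (hlam : ∀ i j, i ≤ j → lamEig j ≤ lamEig i)
    (hA0char : ∀ x : ℝ, (A0 - x • (1 : Matrix (Fin n) (Fin n) ℝ)).det = ∏ i, (lamEig i - x))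
    (μ : Fin m → ℝ) (hμmono : ∀ i j, i ≤ j → μ j ≤ μ i) (hμ0 : μ ⟨0, hm⟩ = ρ)
    (hA1char : ∀ x : ℝ, (A1 - x • (1 : Matrix (Fin m) (Fin m) ℝ)).det = ∏ j, (μ j - x)) :
    ∀ lam : ℝ,
      (coronaA n m A0 A1 b - lam • 1).det =
        (∏ i, (lam ^ 2 - (lamEig i + ρ) * lam + (lamEig i * ρ - m * b ^ 2))) *
          ∏ j ∈ Finset.univ.erase ⟨0, hm⟩, (μ j - lam) ^ n := by
  have key : ∀ lam : ℝ, (∏ j, (μ j - lam)) ≠ 0 →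
      (coronaA n m A0 A1 b - lam • 1).det =
        (∏ i, (lam ^ 2 - (lamEig i + ρ) * lam + (lamEig i * ρ - m * b ^ 2))) *
          ∏ j ∈ Finset.univ.erase ⟨0, hm⟩, (μ j - lam) ^ n := by
    intro lam hne
    have hρ : ρ - lam ≠ 0 := by
      intro h
      exact hne (Finset.prod_eq_zero (Finset.mem_univ ⟨0, hm⟩) (by rw [hμ0]; exact h))
    set C1 : Matrix (Fin m) (Fin m) ℝ := A1 - lam • 1 with hC1
    have hdetC1 : C1.det = ∏ j, (μ j - lam) := hA1char lam
    have hC1unit : IsUnit C1.det := by rw [hdetC1]; exact isUnit_iff_ne_zero.2 hne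
    haveI : Invertible C1 := C1.invertibleOfIsUnitDet hC1unit
    -- row sums of C1 and of C1⁻¹
    have hmul1 : C1.mulVec (fun _ => 1) = fun _ => ρ - lam := by
      funext p
      have h1 : C1.mulVec (fun _ => 1) = A1.mulVec (fun _ => 1) -
          (lam • (1 : Matrix (Fin m) (Fin m) ℝ)).mulVec (fun _ => 1) := by
        rw [hC1, Matrix.sub_mulVec]
      rw [h1, hrow]
      simp [Matrix.smul_mulVec, Matrix.one_mulVec]
    have hinv1 : C1⁻¹.mulVec (fun _ => 1) = fun _ => (ρ - lam)⁻¹ := by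
      have h2 : C1⁻¹.mulVec (C1.mulVec (fun _ => 1)) = fun _ => 1 := by
        rw [Matrix.mulVec_mulVec, Matrix.nonsing_inv_mul _ hC1unit, Matrix.one_mulVec]
      rw [hmul1] at h2
      have h3 : (fun _ => ρ - lam : Fin m → ℝ) = (ρ - lam) • (fun _ => (1:ℝ)) := by
        funext q; simp
      rw [h3, Matrix.mulVec_smul] at h2
      funext p
      have := congrFun h2 p
      simp only [Pi.smul_apply, smul_eq_mul] at this
      exact eq_inv_of_mul_eq_one_right this
    have hsum : ∑ p, ∑ q, C1⁻¹ p q = (m : ℝ) * (ρ - lam)⁻¹ := by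
      have : ∀ p, ∑ q, C1⁻¹ p q = (ρ - lam)⁻¹ := by
        intro p
        have := congrFun hinv1 p
        simpa [Matrix.mulVec, dotProduct] using this
      simp [this, Finset.sum_const, Finset.card_univ]
    -- invertibility of the bottom-right block
    have hDB : (C1 ⊗ₖ (1 : Matrix (Fin n) (Fin n) ℝ)) * (C1⁻¹ ⊗ₖ 1) = 1 := by
      rw [← Matrix.mul_kronecker_mul, Matrix.mul_nonsing_inv _ hC1unit, Matrix.one_mul,
        Matrix.one_kronecker_one]
    haveI : Invertible (C1 ⊗ₖ (1 : Matrix (Fin n) (Fin n) ℝ)) :=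
      invertibleOfRightInverse _ _ hDB
    have hinvOf : ⅟ (C1 ⊗ₖ (1 : Matrix (Fin n) (Fin n) ℝ)) = C1⁻¹ ⊗ₖ 1 :=
      invOf_eq_right_inv hDB
    -- block decomposition of the shifted corona matrix
    have hblock : coronaA n m A0 A1 b - lam • 1 =
        Matrix.fromBlocks (A0 - lam • 1)
          (Matrix.of fun i p => if p.2 = i then b else 0)
          (Matrix.of fun p i => if p.2 = i then b else 0)
          (C1 ⊗ₖ (1 : Matrix (Fin n) (Fin n) ℝ)) := by
      ext i j
      cases i with
      | inl i =>
        cases j with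
        | inl j => simp [coronaA, Matrix.one_apply]
        | inr j => simp [coronaA, Matrix.one_apply]
      | inr i =>
        cases j with
        | inl j => simp [coronaA, Matrix.one_apply]
        | inr j =>
          simp only [coronaA, Matrix.sub_apply, Matrix.smul_apply, Matrix.fromBlocks_apply₂₂,
            Matrix.kroneckerMap_apply, hC1, Matrix.one_apply, smul_eq_mul, Prod.mk.injEq]
          by_cases h1 : i.1 = j.1 <;> by_cases h2 : i.2 = j.2 <;>
            simp [h1, h2, Prod.ext_iff, mul_ite]
      -- end hblock
    -- Schur complement
    rw [hblock, Matrix.det_fromBlocks₂₂, hinvOf]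
    -- compute the middle product
    have hmid : (Matrix.of fun (i : Fin n) (p : Fin m × Fin n) =>
          if p.2 = i then b else 0) * (C1⁻¹ ⊗ₖ (1 : Matrix (Fin n) (Fin n) ℝ)) *
          (Matrix.of fun (p : Fin m × Fin n) (i : Fin n) => if p.2 = i then b else 0) =
        ((m : ℝ) * b ^ 2 * (ρ - lam)⁻¹) • (1 : Matrix (Fin n) (Fin n) ℝ) := by
      ext i i'
      simp only [Matrix.mul_apply, Matrix.of_apply, Matrix.kroneckerMap_apply,
        Fintype.sum_prod_type, Matrix.one_apply, Matrix.smul_apply, smul_eq_mul]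
      rw [Finset.sum_comm]
      simp only [ite_mul, zero_mul, mul_ite, mul_zero, Finset.sum_ite_eq',
        Finset.mem_univ, if_true]
      by_cases h : i = i'
      · subst h
        simp only [if_pos rfl]
        rw [Finset.sum_comm]
        simp only [Finset.sum_ite_eq', Finset.mem_univ, if_true]
        have e0 : ∀ x : Fin m, (∑ p, b * (C1⁻¹ p x * 1)) * b = ∑ p, b ^ 2 * C1⁻¹ p x := by
          intro x
          rw [Finset.sum_mul]
          exact Finset.sum_congr rfl fun p _ => by ring
        rw [Finset.sum_congr rfl fun x _ => e0 x]
        simp only [← Finset.mul_sum]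
        rw [Finset.sum_comm, hsum]
        ring
      · simp only [if_neg h]
        rw [Finset.sum_comm]
        simp only [Finset.sum_ite_eq', Finset.mem_univ, if_true]
        have : ¬(i' = i) := fun h' => h h'.symm
        simp [this]
    rw [hmid]
    -- rewrite the top-left Schur complement determinant
    have hshift : A0 - lam • (1 : Matrix (Fin n) (Fin n) ℝ) -
        ((m : ℝ) * b ^ 2 * (ρ - lam)⁻¹) • 1 =
        A0 - (lam + (m : ℝ) * b ^ 2 * (ρ - lam)⁻¹) • 1 := by
      rw [sub_sub, ← add_smul]
    rw [hshift, hA0char, Matrix.det_kronecker, hdetC1, Matrix.det_one, one_pow, mul_one,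
      Fintype.card_fin]
    -- algebraic identity
    have hsplit : (∏ j, (μ j - lam)) =
        (ρ - lam) * ∏ j ∈ Finset.univ.erase ⟨0, hm⟩, (μ j - lam) := by
      rw [← hμ0]
      exact (Finset.mul_prod_erase _ _ (Finset.mem_univ _)).symm
    rw [hsplit, mul_pow]
    have hfac : (ρ - lam) ^ n * ∏ i, (lamEig i - (lam + (m : ℝ) * b ^ 2 * (ρ - lam)⁻¹)) =
        ∏ i, (lam ^ 2 - (lamEig i + ρ) * lam + (lamEig i * ρ - (m : ℝ) * b ^ 2)) := by
      rw [show ((ρ - lam) ^ n : ℝ) = ∏ _i : Fin n, (ρ - lam) by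
        simp [Finset.prod_const, Finset.card_univ]]
      rw [← Finset.prod_mul_distrib]
      apply Finset.prod_congr rfl
      intro i _
      field_simp
      ring
    calc (ρ - lam) ^ n * (∏ j ∈ Finset.univ.erase ⟨0, hm⟩, (μ j - lam)) ^ n *
          ∏ i, (lamEig i - (lam + (m : ℝ) * b ^ 2 * (ρ - lam)⁻¹))
        = ((ρ - lam) ^ n * ∏ i, (lamEig i - (lam + (m : ℝ) * b ^ 2 * (ρ - lam)⁻¹))) *
          (∏ j ∈ Finset.univ.erase ⟨0, hm⟩, (μ j - lam)) ^ n := by ring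
      _ = (∏ i, (lam ^ 2 - (lamEig i + ρ) * lam + (lamEig i * ρ - (m : ℝ) * b ^ 2))) *
          ∏ j ∈ Finset.univ.erase ⟨0, hm⟩, (μ j - lam) ^ n := by
          rw [hfac, Finset.prod_pow]
  -- extend by continuity
  have hf : Continuous fun x : ℝ =>
      (coronaA n m A0 A1 b - x • (1 : Matrix (Fin n ⊕ Fin m × Fin n) _ ℝ)).det := by
    apply Continuous.matrix_det
    exact continuous_const.sub (continuous_id.smul continuous_const)
  have hg : Continuous fun x : ℝ =>
      (∏ i, (x ^ 2 - (lamEig i + ρ) * x + (lamEig i * ρ - (m:ℝ) * b ^ 2))) *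
        ∏ j ∈ Finset.univ.erase ⟨0, hm⟩, (μ j - x) ^ n := by
    apply Continuous.mul
    · exact continuous_finset_prod _ fun i _ =>
        (((continuous_pow 2).sub (continuous_const.mul continuous_id)).add continuous_const)
    · exact continuous_finset_prod _ fun j _ => (continuous_const.sub continuous_id).pow n
  have hsub : {x : ℝ | (∏ j, (μ j - x)) = 0} ⊆ Set.range μ := by
    intro x hx
    simp only [Set.mem_setOf_eq, Finset.prod_eq_zero_iff] at hx
    obtain ⟨j, _, hj⟩ := hx
    exact ⟨j, by linarith⟩
  have hd : Dense {x : ℝ | (∏ j, (μ j - x)) ≠ 0} := by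
    have hc : ({x : ℝ | (∏ j, (μ j - x)) = 0}).Countable :=
      ((Set.finite_range μ).subset hsub).countable
    have := hc.dense_compl ℝ
    exact this
  have := Continuous.ext_on hd hf hg (fun x hx => key x hx)
  intro lam
  exact congrFun this lam
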